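/- arXiv:math/0410303 — 2 statements merged into one kernel-verified Lean document; each statement's English description precedes it below -/
import Mathlib

section
/- Let R be a commutative Noetherian ring, I an ideal of R, E an injective R-module, and M an R-module. The map Hom_R(M, E) → Hom_R((0 :_M I), E) given by restricting a homomorphism along the inclusion (0 :_M I) ⊆ M is surjective, and its kernel is the submodule I·Hom_R(M, E). -/
universe u v

section Aux

variable {R : Type u} [CommRing R] [IsNoetherianRing R]

/-- If `R ⧸ A` is `v`-small, so is `R ⧸ A ^ (m+1)`. -/
lemma aux_small_quot_pow (A : Ideal R) (hA : Small.{v} (R ⧸ A)) :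
    ∀ m : ℕ, Small.{v} (R ⧸ (A ^ (m + 1) : Ideal R)) := by
  intro m
  induction m with
  | zero => simpa [pow_one] using hA
  | succ m ih =>
    -- generators of A ^ (m+1)
    obtain ⟨t, x, hx⟩ := Submodule.fg_iff_exists_fin_generating_family.mp
      (IsNoetherian.noetherian (A ^ (m + 1) : Ideal R))
    have hxmem : ∀ i, x i ∈ (A ^ (m + 1) : Ideal R) := fun i =>
      hx ▸ Submodule.subset_span ⟨i, rfl⟩
    let σ : (R ⧸ (A ^ (m + 1) : Ideal R)) → R :=
      Function.surjInv (Submodule.Quotient.mk_surjective _)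
    have hσ : ∀ q, (Submodule.Quotient.mk (σ q) : R ⧸ (A ^ (m + 1) : Ideal R)) = q :=
      fun q => Function.surjInv_eq _ q
    let τ : (R ⧸ A) → R := Function.surjInv (Submodule.Quotient.mk_surjective _)
    have hτ : ∀ q, (Submodule.Quotient.mk (τ q) : R ⧸ A) = q :=
      fun q => Function.surjInv_eq _ q
    haveI : Small.{v} ((R ⧸ (A ^ (m + 1) : Ideal R)) × (Fin t → R ⧸ A)) := by
      infer_instance
    refine small_of_surjective
      (f := fun (p : (R ⧸ (A ^ (m + 1) : Ideal R)) × (Fin t → R ⧸ A)) =>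
        (Submodule.Quotient.mk (σ p.1 + ∑ i, τ (p.2 i) * x i) :
          R ⧸ (A ^ (m + 1 + 1) : Ideal R))) ?_
    intro y
    obtain ⟨r, rfl⟩ := Submodule.Quotient.mk_surjective _ y
    have h1 : r - σ (Submodule.Quotient.mk r) ∈ (A ^ (m + 1) : Ideal R) := by
      rw [← Submodule.Quotient.eq, hσ]
    obtain ⟨c, hc⟩ := (Submodule.mem_span_range_iff_exists_fun R).mp (by rw [hx]; exact h1)
    refine ⟨⟨Submodule.Quotient.mk r, fun i => Submodule.Quotient.mk (c i)⟩, ?_⟩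
    rw [Submodule.Quotient.eq]
    have key : (σ (Submodule.Quotient.mk r) + ∑ i, τ (Submodule.Quotient.mk (c i)) * x i) - r
        = ∑ i, (τ (Submodule.Quotient.mk (c i)) - c i) * x i := by
      have : (∑ i, c i • x i) = r - σ (Submodule.Quotient.mk r) := hc
      simp only [sub_mul, Finset.sum_sub_distrib]
      rw [show (∑ i, c i * x i) = r - σ (Submodule.Quotient.mk r) by
        simpa [smul_eq_mul] using hc]
      ring
    rw [key]
    refine Submodule.sum_mem _ fun i _ => ?_
    have hτA : τ (Submodule.Quotient.mk (c i)) - c i ∈ A := by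
      rw [← Submodule.Quotient.eq, hτ]
    have : (A ^ (m + 1 + 1) : Ideal R) = A * A ^ (m + 1) := by ring
    rw [this]
    exact Ideal.mul_mem_mul hτA (hxmem i)

/-- Over a Noetherian ring, a module that is injective with respect to modules in its own
universe satisfies Baer's criterion (which is universe-free). -/
lemma aux_baer_of_injective {E : Type v} [AddCommGroup E] [Module R E]
    (hE : Module.Injective R E) : Module.Baer R E := by
  intro J φ
  classical
  -- finite generation of J
  obtain ⟨t, a, ha⟩ := Submodule.fg_iff_exists_fin_generating_family.mp
    (IsNoetherian.noetherian J)
  have haJ : ∀ i, a i ∈ J := fun i => ha ▸ Submodule.subset_span ⟨i, rfl⟩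
  set v : Fin t → E := fun i => φ ⟨a i, haJ i⟩ with hv
  set θ : R →ₗ[R] (Fin t → E) :=
    LinearMap.pi (fun i => LinearMap.toSpanSingleton R E (v i)) with hθ
  set A : Ideal R := LinearMap.ker θ with hA
  -- A annihilates the image of φ
  have hAkill : ∀ r ∈ A, ∀ x : J, r • φ x = 0 := by
    intro r hr x
    obtain ⟨c, hc⟩ := (Submodule.mem_span_range_iff_exists_fun R).mp (by rw [ha]; exact x.2)
    have hx : x = ∑ i, c i • (⟨a i, haJ i⟩ : J) := by
      apply Subtype.ext
      push_cast [Submodule.coe_smul]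
      exact hc.symm
    have hrv : ∀ i, r • v i = 0 := by
      intro i
      have := LinearMap.mem_ker.mp hr
      have := congr_fun this i
      simpa [θ, LinearMap.toSpanSingleton, LinearMap.pi_apply] using this
    rw [hx, map_sum, Finset.smul_sum]
    refine Finset.sum_eq_zero fun i _ => ?_
    rw [map_smul, smul_comm, hrv, smul_zero]
  -- Artin–Rees
  obtain ⟨k, hk⟩ := Ideal.exists_pow_inf_eq_pow_smul A (J : Submodule R R)
  set B : Ideal R := A ^ (k + 1) with hB
  -- φ vanishes on J ∩ B
  have hφB : ∀ x : J, (x : R) ∈ B → φ x = 0 := by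
    intro x hxB
    have hxAJ : (x : R) ∈ A • (J : Submodule R R) := by
      have hmem : (x : R) ∈ (A ^ (k + 1) • ⊤ ⊓ (J : Submodule R R) : Submodule R R) := by
        refine ⟨?_, x.2⟩
        have := Submodule.smul_mem_smul hxB (Submodule.mem_top (x := (1 : R)))
        simpa using this
      rw [hk (k + 1) (Nat.le_succ k)] at hmem
      have : A ^ (k + 1 - k) • (A ^ k • ⊤ ⊓ (J : Submodule R R)) ≤
          A • (J : Submodule R R) := by
        have h2 : k + 1 - k = 1 := by omega
        rw [h2, pow_one]
        exact Submodule.smul_mono le_rfl inf_le_right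
      exact this hmem
    have key : ∀ y ∈ A • (J : Submodule R R),
        ∃ hy : y ∈ J, φ ⟨y, hy⟩ = 0 := by
      intro y hy
      refine Submodule.smul_induction_on hy ?_ ?_
      · intro r hr z hz
        refine ⟨J.smul_mem r hz, ?_⟩
        have : (⟨r • z, J.smul_mem r hz⟩ : J) = r • (⟨z, hz⟩ : J) := rfl
        rw [this, map_smul]
        exact hAkill r hr ⟨z, hz⟩
      · rintro y z ⟨hyJ, hy0⟩ ⟨hzJ, hz0⟩
        refine ⟨J.add_mem hyJ hzJ, ?_⟩
        have : (⟨y + z, J.add_mem hyJ hzJ⟩ : J) = (⟨y, hyJ⟩ : J) + ⟨z, hzJ⟩ := rfl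
        rw [this, map_add, hy0, hz0, add_zero]
    obtain ⟨hy, h0⟩ := key (x : R) hxAJ
    simpa using h0
  -- the pushout
  set ρ : (J × B) →ₗ[R] R × E :=
    LinearMap.prod
      (J.subtype ∘ₗ LinearMap.fst R J B + B.subtype ∘ₗ LinearMap.snd R J B)
      (-(φ ∘ₗ LinearMap.fst R J B)) with hρ
  set W : Submodule R (R × E) := LinearMap.range ρ with hW
  set ι : E →ₗ[R] ((R × E) ⧸ W) := W.mkQ ∘ₗ LinearMap.inr R R E with hι
  have hρ_apply : ∀ (j : J) (b : B), ρ (j, b) = ((j : R) + (b : R), -φ j) := by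
    intro j b; rfl
  have hιinj : Function.Injective ι := by
    rw [injective_iff_map_eq_zero]
    intro e he
    have : ((0 : R), e) ∈ W := by
      have : W.mkQ (0, e) = 0 := he
      rwa [Submodule.mkQ_apply, Submodule.Quotient.mk_eq_zero] at this
    obtain ⟨⟨j, b⟩, hjb⟩ := this
    rw [hρ_apply] at hjb
    have h1 : (j : R) + (b : R) = 0 := congr_arg Prod.fst hjb
    have h2 : -φ j = e := congr_arg Prod.snd hjb
    have hjB : (j : R) ∈ B := by
      have hj' : (j : R) = -(b : R) := eq_neg_of_add_eq_zero_left h1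
      rw [hj']; exact B.neg_mem b.2
    rw [← h2, hφB j hjB, neg_zero]
  -- smallness
  have hsmallA : Small.{v} (R ⧸ A) := by
    have hinj : Function.Injective (A.liftQ θ le_rfl) := by
      rw [← LinearMap.ker_eq_bot]
      exact Submodule.ker_liftQ_eq_bot _ _ _ le_rfl
    exact small_of_injective hinj
  have hsmallB : Small.{v} (R ⧸ B) := aux_small_quot_pow A hsmallA k
  set J' : Ideal R := J ⊔ B with hJ'
  have hsmallJ' : Small.{v} (R ⧸ J') := by
    have hsurj : Function.Surjective
        (Submodule.mapQ B J' LinearMap.id (by rw [Submodule.comap_id]; exact le_sup_right)) := by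
      intro y
      obtain ⟨r, rfl⟩ := Submodule.Quotient.mk_surjective _ y
      exact ⟨Submodule.Quotient.mk r, by rw [Submodule.mapQ_apply]; rfl⟩
    exact small_of_surjective hsurj
  have hsmallP : Small.{v} ((R × E) ⧸ W) := by
    let σ : (R ⧸ J') → R := Function.surjInv (Submodule.Quotient.mk_surjective _)
    have hσ : ∀ q, (Submodule.Quotient.mk (σ q) : R ⧸ J') = q :=
      fun q => Function.surjInv_eq _ q
    refine small_of_surjective
      (f := fun (p : E × (R ⧸ J')) => W.mkQ (σ p.2, p.1)) ?_
    intro y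
    obtain ⟨⟨r, e⟩, rfl⟩ := Submodule.Quotient.mk_surjective _ y
    have h1 : σ (Submodule.Quotient.mk r) - r ∈ J' := by
      rw [← Submodule.Quotient.eq, hσ]
    have h1' : σ (Submodule.Quotient.mk r) - r ∈ J ⊔ B := h1
    obtain ⟨j, hj, b, hb, hjb⟩ := Submodule.mem_sup.mp h1'
    refine ⟨⟨e - φ ⟨j, hj⟩, Submodule.Quotient.mk r⟩, ?_⟩
    show W.mkQ (σ (Submodule.Quotient.mk r), e - φ ⟨j, hj⟩) = Submodule.Quotient.mk (r, e)
    rw [Submodule.mkQ_apply, Submodule.Quotient.eq]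
    refine ⟨(⟨j, hj⟩, ⟨b, hb⟩), ?_⟩
    rw [hρ_apply]
    ext
    · simpa using hjb
    · simp
  -- retraction via injectivity in universe v
  let eP : Shrink.{v} ((R × E) ⧸ W) ≃ₗ[R] ((R × E) ⧸ W) := Shrink.linearEquiv R _
  obtain ⟨h, hh⟩ := hE.out (eP.symm.toLinearMap ∘ₗ ι)
    (eP.symm.injective.comp hιinj) LinearMap.id
  set y₀ : (R × E) ⧸ W := W.mkQ (1, 0) with hy₀
  refine ⟨LinearMap.toSpanSingleton R E (h (eP.symm y₀)), fun x hx => ?_⟩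
  have h2 : W.mkQ ((x : R), 0) = ι (φ ⟨x, hx⟩) := by
    show W.mkQ ((x : R), 0) = W.mkQ (0, φ ⟨x, hx⟩)
    rw [Submodule.mkQ_apply, Submodule.mkQ_apply, Submodule.Quotient.eq]
    refine ⟨(⟨x, hx⟩, 0), ?_⟩
    rw [hρ_apply]
    ext <;> simp
  have h3 : x • y₀ = ι (φ ⟨x, hx⟩) := by
    rw [hy₀, ← map_smul, ← h2]
    congr 1
    ext <;> simp
  calc LinearMap.toSpanSingleton R E (h (eP.symm y₀)) x
      = x • h (eP.symm y₀) := rfl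
    _ = h (eP.symm (x • y₀)) := by rw [map_smul, map_smul]
    _ = h (eP.symm (ι (φ ⟨x, hx⟩))) := by rw [h3]
    _ = h ((eP.symm.toLinearMap ∘ₗ ι) (φ ⟨x, hx⟩)) := rfl
    _ = φ ⟨x, hx⟩ := by rw [hh]; rfl

end Aux

/-- from the proof of Lemma 1. Let `R` be a commutative Noetherian ring,
`I` an ideal, `E` an injective `R`-module, and `M` an `R`-module.  The restriction map
`Hom_R(M, E) → Hom_R((0 :_M I), E)` along the inclusion `(0 :_M I) ⊆ M` is surjective, and
its kernel is `I·Hom_R(M, E)`.  Here `(0 :_M I) = {x ∈ M | I x = 0}` is realized as the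
torsion submodule `Submodule.torsionBySet R M I`. -/
theorem stmt_1 {R : Type*} [CommRing R] [IsNoetherianRing R] (I : Ideal R)
    (E : Type*) [AddCommGroup E] [Module R E] (hE : Module.Injective R E)
    (M : Type*) [AddCommGroup M] [Module R M] :
    Function.Surjective
      (LinearMap.lcomp R E (Submodule.torsionBySet R M (I : Set R)).subtype) ∧
    LinearMap.ker (LinearMap.lcomp R E (Submodule.torsionBySet R M (I : Set R)).subtype) =
      I • (⊤ : Submodule R (M →ₗ[R] E)) := by
  classical
  have hBaer : Module.Baer R E := aux_baer_of_injective hE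
  set T := Submodule.torsionBySet R M (I : Set R) with hT
  constructor
  · intro g
    obtain ⟨h, hh⟩ := hBaer.extension_property T.subtype (Submodule.injective_subtype T) g
    exact ⟨h, hh⟩
  · apply le_antisymm
    · -- hard direction
      intro f hf
      have hf' : ∀ x : M, x ∈ T → f x = 0 := by
        intro x hx
        have := LinearMap.congr_fun (LinearMap.mem_ker.mp hf) ⟨x, hx⟩
        simpa using this
      -- generators of I
      obtain ⟨s, hs⟩ := (isNoetherianRing_iff_ideal_fg R).mp ‹IsNoetherianRing R› I
      -- the map φ : M → (s → M)
      let φ : M →ₗ[R] (s → M) := LinearMap.pi fun a => (a : R) • LinearMap.id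
      have hker : LinearMap.ker φ ≤ LinearMap.ker f := by
        intro x hx
        apply LinearMap.mem_ker.mpr
        apply hf'
        rw [hT, ← hs, ← Submodule.torsionBySet_eq_torsionBySet_span]
        rw [Submodule.mem_torsionBySet_iff]
        intro a
        have := congr_fun (LinearMap.mem_ker.mp hx) ⟨a, a.2⟩
        simpa [φ] using this
      -- factor through the quotient
      let f' : (M ⧸ LinearMap.ker φ) →ₗ[R] E := (LinearMap.ker φ).liftQ f hker
      let φ' : (M ⧸ LinearMap.ker φ) →ₗ[R] (s → M) := (LinearMap.ker φ).liftQ φ le_rfl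
      have hφ'inj : Function.Injective φ' := by
        rw [← LinearMap.ker_eq_bot]
        exact Submodule.ker_liftQ_eq_bot _ _ _ le_rfl
      obtain ⟨g, hg⟩ := hBaer.extension_property φ' hφ'inj f'
      have key : ∀ x : M, f x = g (φ x) := by
        intro x
        have h1 : f x = f' (Submodule.Quotient.mk x) := rfl
        have h2 : φ' (Submodule.Quotient.mk x) = φ x := rfl
        rw [h1, ← h2, ← LinearMap.comp_apply, hg]
      -- f = ∑ a : s, a • (g ∘ single a)
      have hfsum : f = ∑ a : s, (a : R) •
          (g.comp (LinearMap.single R (fun _ : s => M) a)) := by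
        ext x
        rw [key]
        have hφx : φ x = ∑ a : s, Pi.single a ((a : R) • x) := by
          ext a
          simp [φ, Finset.sum_apply, Pi.single_apply]
        rw [hφx, map_sum]
        simp only [LinearMap.sum_apply, LinearMap.smul_apply, LinearMap.comp_apply,
          LinearMap.single_apply]
        refine Finset.sum_congr rfl fun a _ => ?_
        rw [← map_smul]
        congr 1
        ext b
        by_cases hab : a = b <;> simp [Pi.single_apply, hab]
      rw [hfsum]
      apply Submodule.sum_mem
      intro a _
      have haI : (a : R) ∈ I := by
        rw [← hs]; exact Ideal.subset_span a.2
      exact Submodule.smul_mem_smul haI Submodule.mem_top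
    · -- easy direction
      rw [Submodule.smul_le]
      rintro a haI f -
      rw [LinearMap.mem_ker]
      ext x
      have hx : a • (x : M) = 0 := (Submodule.mem_torsionBySet_iff _ _).mp x.2 ⟨a, haI⟩
      have : (a • f) (x : M) = f (a • (x : M)) := by
        rw [LinearMap.smul_apply, ← map_smul]
      simp only [LinearMap.lcomp_apply, LinearMap.coe_comp, Function.comp_apply,
        Submodule.coe_subtype, LinearMap.zero_apply]
      rw [this, hx, map_zero]
end

section
/- Let R be a commutative Noetherian ring, I an ideal, T an R-module, and U, V, W, Z finitely generated submodules of T. Assume that Z ⊆ U or W ⊆ V. Then there exist finitely generated submodules A, B of T and a natural number k such that, for all n ≥ k, (U + I^n V) ∩ (Z + I^n W) = A + I^{n−k} B. -/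
open Submodule

/-- Lemma 2(a). Let `R` be a commutative Noetherian ring, `I` an ideal,
`T` an `R`-module, and `U`, `V`, `W`, `Z` finitely generated submodules of `T`.
Assume `Z ⊆ U` or `W ⊆ V`.  Then there exist finitely generated submodules `A`, `B` of `T`
and `k : ℕ` such that for all `n ≥ k`,
`(U + IⁿV) ∩ (Z + IⁿW) = A + I^(n-k) B`. -/
theorem stmt_2 {R : Type*} [CommRing R] [IsNoetherianRing R] (I : Ideal R)
    {T : Type*} [AddCommGroup T] [Module R T]
    (U V W Z : Submodule R T) (hU : U.FG) (hV : V.FG) (hW : W.FG) (hZ : Z.FG)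
    (h : Z ≤ U ∨ W ≤ V) :
    ∃ (A B : Submodule R T), A.FG ∧ B.FG ∧ ∃ k : ℕ, ∀ n ≥ k,
      (U ⊔ I ^ n • V) ⊓ (Z ⊔ I ^ n • W) = A ⊔ I ^ (n - k) • B := by
  classical
  set M : Submodule R T := U ⊔ V ⊔ W ⊔ Z with hMdef
  have hM : M.FG := ((hU.sup hV).sup hW).sup hZ
  have hUM : U ≤ M := le_sup_left.trans (le_sup_left.trans le_sup_left)
  have hVM : V ≤ M := le_sup_right.trans (le_sup_left.trans le_sup_left)
  have hWM : W ≤ M := le_sup_right.trans le_sup_left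
  have hZM : Z ≤ M := le_sup_right
  -- Realise `M` as the image of an injective map from a finite module in the same
  -- universe as `R`.
  obtain ⟨s0, f, hf⟩ := Submodule.fg_iff_exists_fin_generating_family.mp hM
  set p : (Fin s0 → R) →ₗ[R] T := Fintype.linearCombination R f with hp
  have hrange : LinearMap.range p = M := by
    rw [hp, Fintype.range_linearCombination, hf]
  set K : Submodule R (Fin s0 → R) := LinearMap.ker p with hK
  set ι : ((Fin s0 → R) ⧸ K) →ₗ[R] T := K.liftQ p le_rfl with hι
  have hinj : Function.Injective ι := by
    rw [← LinearMap.ker_eq_bot, hι]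
    exact Submodule.ker_liftQ_eq_bot _ _ _ le_rfl
  have hrι : LinearMap.range ι = M := by
    rw [hι, Submodule.range_liftQ, hrange]
  haveI : IsNoetherian R ((Fin s0 → R) ⧸ K) := inferInstance
  have hmc : ∀ X : Submodule R T, X ≤ M → map ι (comap ι X) = X := by
    intro X hX
    rw [Submodule.map_comap_eq, hrι, inf_eq_right.mpr hX]
  set U' : Submodule R ((Fin s0 → R) ⧸ K) := comap ι U with hU'def
  set V' : Submodule R ((Fin s0 → R) ⧸ K) := comap ι V with hV'def
  set W' : Submodule R ((Fin s0 → R) ⧸ K) := comap ι W with hW'def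
  set Z' : Submodule R ((Fin s0 → R) ⧸ K) := comap ι Z with hZ'def
  have hU' : map ι U' = U := hmc U hUM
  have hV' : map ι V' = V := hmc V hVM
  have hW' : map ι W' = W := hmc W hWM
  have hZ' : map ι Z' = Z := hmc Z hZM
  rcases h with hZU | hWV
  · -- Case `Z ≤ U`
    set F : I.Filtration ((Fin s0 → R) ⧸ K) :=
      { N := fun n => (U' ⊔ I ^ n • V') ⊓ I ^ n • W'
        mono := fun i => by
          refine inf_le_inf (sup_le_sup_left ?_ _) ?_ <;>
          · rw [pow_succ, mul_smul]
            exact smul_mono_right _ Submodule.smul_le_right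
        smul_le := fun i => by
          refine (smul_inf_le _ _ _).trans (inf_le_inf ?_ ?_)
          · rw [Submodule.smul_sup]
            refine sup_le (Submodule.smul_le_right.trans le_sup_left) ?_
            rw [pow_succ', mul_smul]
            exact le_sup_right
          · rw [pow_succ', mul_smul] } with hF
    have hFstab : F.Stable := by
      refine (I.stableFiltration_stable (⊤ : Submodule R ((Fin s0 → R) ⧸ K))).of_le ?_
      intro n
      exact inf_le_right.trans (smul_mono_right _ le_top)
    obtain ⟨k, hk⟩ := hFstab.exists_pow_smul_eq_of_ge
    refine ⟨Z, map ι (F.N k), hZ, (IsNoetherian.noetherian (F.N k)).map ι, k, fun n hn => ?_⟩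
    have hmap : ∀ m, map ι (F.N m) = (U ⊔ I ^ m • V) ⊓ I ^ m • W := by
      intro m
      show map ι ((U' ⊔ I ^ m • V') ⊓ I ^ m • W') = _
      rw [Submodule.map_inf _ hinj, Submodule.map_sup, Submodule.map_smul'',
        Submodule.map_smul'', hU', hV', hW']
    calc (U ⊔ I ^ n • V) ⊓ (Z ⊔ I ^ n • W)
        = (Z ⊔ I ^ n • W) ⊓ (U ⊔ I ^ n • V) := inf_comm _ _
      _ = Z ⊔ (I ^ n • W ⊓ (U ⊔ I ^ n • V)) :=
          sup_inf_assoc_of_le _ (hZU.trans le_sup_left)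
      _ = Z ⊔ ((U ⊔ I ^ n • V) ⊓ I ^ n • W) := by rw [inf_comm]
      _ = Z ⊔ map ι (F.N n) := by rw [hmap]
      _ = Z ⊔ I ^ (n - k) • map ι (F.N k) := by
          rw [hk n hn, Submodule.map_smul'']
  · -- Case `W ≤ V`
    set q : ((Fin s0 → R) ⧸ K) →ₗ[R] (((Fin s0 → R) ⧸ K) ⧸ U') := U'.mkQ with hq
    set V'' : Submodule R (((Fin s0 → R) ⧸ K) ⧸ U') := map q V' with hV''
    set Z'' : Submodule R (((Fin s0 → R) ⧸ K) ⧸ U') := map q Z' with hZ''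
    set H : I.Filtration (((Fin s0 → R) ⧸ K) ⧸ U') :=
      { N := fun n => Z'' ⊓ I ^ n • V''
        mono := fun i => by
          refine inf_le_inf_left _ ?_
          rw [pow_succ, mul_smul]
          exact smul_mono_right _ Submodule.smul_le_right
        smul_le := fun i => by
          refine (smul_inf_le _ _ _).trans
            (inf_le_inf Submodule.smul_le_right ?_)
          rw [pow_succ', mul_smul] } with hH
    have hHstab : H.Stable := by
      refine (I.stableFiltration_stable V'').of_le ?_
      intro n
      exact inf_le_right
    obtain ⟨k, hk⟩ := hHstab.exists_pow_smul_eq_of_ge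
    set Gk : Submodule R ((Fin s0 → R) ⧸ K) := Z' ⊓ (U' ⊔ I ^ k • V') with hGkdef
    -- key lemma (1)
    have key1 : ∀ m, map q (Z' ⊓ (U' ⊔ I ^ m • V')) = H.N m := by
      intro m
      apply le_antisymm
      · refine (Submodule.map_inf_le _).trans (inf_le_inf le_rfl ?_)
        rw [Submodule.map_sup, Submodule.mkQ_map_self, bot_sup_eq, Submodule.map_smul'']
      · rintro x ⟨hx1, hx2⟩
        obtain ⟨z, hz, rfl⟩ := hx1
        have hx2' : q z ∈ map q (I ^ m • V') := by
          rwa [Submodule.map_smul'']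
        obtain ⟨y, hy, hqy⟩ := hx2'
        have hzy : z - y ∈ U' := by
          have h0 : q (z - y) = 0 := by rw [map_sub, hqy, sub_self]
          rwa [hq, ← LinearMap.mem_ker, Submodule.ker_mkQ] at h0
        have hzmem : z ∈ U' ⊔ I ^ m • V' := by
          have hzz : z = (z - y) + y := by abel
          rw [hzz]
          exact Submodule.add_mem_sup hzy hy
        exact ⟨z, ⟨hz, hzmem⟩, rfl⟩
    -- key lemma (2)
    have key2 : ∀ n ≥ k, Z' ⊓ (U' ⊔ I ^ n • V') = (Z' ⊓ U') ⊔ I ^ (n - k) • Gk := by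
      intro n hn
      have hpow : I ^ (n - k) • (I ^ k • V') = I ^ n • V' := by
        rw [← mul_smul, ← pow_add, Nat.sub_add_cancel hn]
      apply le_antisymm
      · rintro x ⟨hxZ, hxU⟩
        have hmem : q x ∈ map q (I ^ (n - k) • Gk) := by
          rw [Submodule.map_smul'', key1 k, ← hk n hn, ← key1 n]
          exact ⟨x, ⟨hxZ, hxU⟩, rfl⟩
        obtain ⟨y, hy, hqy⟩ := hmem
        have hyZ : y ∈ Z' := (Submodule.smul_le_right.trans inf_le_left) hy
        have hxy : x - y ∈ U' := by
          have h0 : q (x - y) = 0 := by rw [map_sub, hqy, sub_self]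
          rwa [hq, ← LinearMap.mem_ker, Submodule.ker_mkQ] at h0
        have hxx : x = (x - y) + y := by abel
        rw [hxx]
        exact Submodule.add_mem_sup ⟨sub_mem hxZ hyZ, hxy⟩ hy
      · refine sup_le (inf_le_inf_left _ le_sup_left) (le_inf ?_ ?_)
        · exact Submodule.smul_le_right.trans inf_le_left
        · refine (smul_mono_right _ inf_le_right).trans ?_
          rw [Submodule.smul_sup, hpow]
          exact sup_le (Submodule.smul_le_right.trans le_sup_left) le_sup_right
    refine ⟨map ι (Z' ⊓ U'), map ι (I ^ k • W' ⊔ Gk),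
      (IsNoetherian.noetherian _).map ι, (IsNoetherian.noetherian _).map ι, k, fun n hn => ?_⟩
    have hpowW : I ^ (n - k) • (I ^ k • W) = I ^ n • W := by
      rw [← mul_smul, ← pow_add, Nat.sub_add_cancel hn]
    have hWle : I ^ n • W ≤ U ⊔ I ^ n • V :=
      (smul_mono_right _ hWV).trans le_sup_right
    calc (U ⊔ I ^ n • V) ⊓ (Z ⊔ I ^ n • W)
        = (I ^ n • W ⊔ Z) ⊓ (U ⊔ I ^ n • V) := by rw [inf_comm, sup_comm]
      _ = I ^ n • W ⊔ (Z ⊓ (U ⊔ I ^ n • V)) := sup_inf_assoc_of_le _ hWle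
      _ = I ^ n • W ⊔ map ι (Z' ⊓ (U' ⊔ I ^ n • V')) := by
          rw [Submodule.map_inf _ hinj, Submodule.map_sup, Submodule.map_smul'',
            hU', hV', hZ']
      _ = I ^ n • W ⊔ (map ι (Z' ⊓ U') ⊔ I ^ (n - k) • map ι Gk) := by
          rw [key2 n hn, Submodule.map_sup, Submodule.map_smul'']
      _ = map ι (Z' ⊓ U') ⊔ I ^ (n - k) • map ι (I ^ k • W' ⊔ Gk) := by
          rw [Submodule.map_sup, Submodule.map_smul'', hW', Submodule.smul_sup, hpowW]
          rw [sup_comm (I ^ n • W), sup_assoc, sup_comm (I ^ n • W)]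
end
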